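/- Let T be a triangle cut by a C² interface Γ into T⁺ and T⁻, let β be piecewise constant with values β⁺, β⁻ and bounds 0 < β̲ ≤ β ≤ β̄, and let φ be a piecewise linear immersed finite element function on T satisfying the flux continuity condition [β ∇φ · n_Γ] = 0 on Γ. Then for any edge e of T with unit normal n_e, ‖β ∇φ · n_e‖_{L²(e)} ≤ C h^{-1/2} (1 + β̄/β̲) ‖β ∇φ‖_{L²(T)}, where h is the diameter of T and C depends only on the shape regularity of T. -/

import Mathlib

lemma parseval2 (n t : EuclideanSpace ℝ (Fin 2)) (hn : ‖n‖ = 1) (ht : ‖t‖ = 1)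
    (hnt : (inner ℝ n t : ℝ) = 0) (x y : EuclideanSpace ℝ (Fin 2)) :
    (inner ℝ x y : ℝ) = inner ℝ x n * inner ℝ y n + inner ℝ x t * inner ℝ y t := by
  have hnn : (inner ℝ n n : ℝ) = 1 := by
    rw [real_inner_self_eq_norm_sq, hn]; norm_num
  have htt : (inner ℝ t t : ℝ) = 1 := by
    rw [real_inner_self_eq_norm_sq, ht]; norm_num
  have htn : (inner ℝ t n : ℝ) = 0 := by rw [real_inner_comm]; exact hnt
  have horth : Orthonormal ℝ ![n, t] := by
    rw [orthonormal_iff_ite]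
    intro i j
    fin_cases i <;> fin_cases j <;>
      simp only [Matrix.cons_val_zero, Matrix.cons_val_one, Matrix.head_cons, Fin.mk_zero,
        Fin.mk_one] <;>
      simp [hnn, htt, htn, hnt, hn, ht]
  have hcard : Fintype.card (Fin 2) = Module.finrank ℝ (EuclideanSpace ℝ (Fin 2)) := by simp
  let b := basisOfOrthonormalOfCardEqFinrank horth hcard
  have hb : ⇑b = ![n, t] := coe_basisOfOrthonormalOfCardEqFinrank horth hcard
  have hx := b.sum_repr x
  rw [Fin.sum_univ_two, hb] at hx
  simp only [Matrix.cons_val_zero, Matrix.cons_val_one, Matrix.head_cons] at hx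
  set r0 := b.repr x 0
  set r1 := b.repr x 1
  have hxn : (inner ℝ x n : ℝ) = r0 := by
    rw [← hx, inner_add_left, real_inner_smul_left, real_inner_smul_left, hnn, htn]; ring
  have hxt : (inner ℝ x t : ℝ) = r1 := by
    rw [← hx, inner_add_left, real_inner_smul_left, real_inner_smul_left, htt, hnt]; ring
  rw [← hx, inner_add_left, real_inner_smul_left, real_inner_smul_left,
    inner_add_left, real_inner_smul_left, real_inner_smul_left,
    inner_add_left, real_inner_smul_left, real_inner_smul_left,
    hnn, htt, hnt, htn, real_inner_comm n y, real_inner_comm t y]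
  ring

lemma rot_bound (α γ w u : ℝ) (hαγ : α ^ 2 + γ ^ 2 = 1) :
    (α * w + γ * u) ^ 2 ≤ w ^ 2 + u ^ 2 := by
  nlinarith [sq_nonneg (α * u - γ * w), sq_nonneg w, sq_nonneg u]

lemma edge_sq (α γ β a b0 : ℝ) (hαγ : α ^ 2 + γ ^ 2 = 1) :
    (β * (α * a + γ * b0)) ^ 2 ≤ (β * a) ^ 2 + (β * b0) ^ 2 := by
  have e : (β * (α * a + γ * b0)) ^ 2 = (α * (β * a) + γ * (β * b0)) ^ 2 := by ring
  rw [e]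
  exact rot_bound α γ (β * a) (β * b0) hαγ

lemma amp_sq (K x y b0 : ℝ) (hx : 0 ≤ x) (hle : x ≤ K * y) :
    (x * b0) ^ 2 ≤ K ^ 2 * (y * b0) ^ 2 := by
  have h1 : 0 ≤ (K * y - x) * (K * y + x) := mul_nonneg (by linarith) (by linarith)
  nlinarith [mul_nonneg h1 (sq_nonneg b0)]

lemma comp_bound (K w u v : ℝ) (hK1 : 1 ≤ K) (huv : u ^ 2 ≤ K ^ 2 * v ^ 2) :
    w ^ 2 + u ^ 2 ≤ K ^ 2 * (w ^ 2 + v ^ 2) := by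
  have hK2 : 1 ≤ K ^ 2 := by nlinarith
  have hw2 : w ^ 2 ≤ K ^ 2 * w ^ 2 := le_mul_of_one_le_left (sq_nonneg w) hK2
  nlinarith [huv, hw2]

lemma key_scalar (ρ h K ap am Np Nm : ℝ) (hK1 : 1 ≤ K)
    (hNp0 : 0 ≤ Np) (hNm0 : 0 ≤ Nm) (hap : 0 ≤ ap) (ham : 0 ≤ am)
    (hNmK : Nm ≤ K ^ 2 * Np) (hNpK : Np ≤ K ^ 2 * Nm)
    (hshape : ρ * h ^ 2 ≤ ap + am) :
    ρ * h ^ 2 * (Np + Nm) ≤ 2 * (1 + K) ^ 2 * (ap * Np + am * Nm) := by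
  have e1 : ρ * h ^ 2 * (Np + Nm) ≤ (ap + am) * (Np + Nm) :=
    mul_le_mul_of_nonneg_right hshape (by linarith)
  have e2 : ap * Nm ≤ K ^ 2 * (ap * Np) := by
    calc ap * Nm ≤ ap * (K ^ 2 * Np) := mul_le_mul_of_nonneg_left hNmK hap
      _ = K ^ 2 * (ap * Np) := by ring
  have e3 : am * Np ≤ K ^ 2 * (am * Nm) := by
    calc am * Np ≤ am * (K ^ 2 * Nm) := mul_le_mul_of_nonneg_left hNpK ham
      _ = K ^ 2 * (am * Nm) := by ring
  have e4 : 0 ≤ ap * Np + am * Nm :=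
    add_nonneg (mul_nonneg hap hNp0) (mul_nonneg ham hNm0)
  have e5 : 0 ≤ (1 + 4 * K + K ^ 2) * (ap * Np + am * Nm) :=
    mul_nonneg (by nlinarith) e4
  nlinarith [e1, e2, e3, e5]

set_option maxHeartbeats 1000000 in
theorem ifem_edge_trace_estimate :
    ∀ ρ : ℝ, 0 < ρ →
    ∃ C : ℝ, 0 < C ∧
      ∀ (h βlo βhi βp βm lep lem ap am : ℝ)
        (nΓ tΓ ne gp gm : EuclideanSpace ℝ (Fin 2)),
        0 < h → 0 < βlo → βlo ≤ βp → βp ≤ βhi → βlo ≤ βm → βm ≤ βhi →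
        ‖nΓ‖ = 1 → ‖tΓ‖ = 1 → (inner ℝ nΓ tΓ : ℝ) = 0 → ‖ne‖ = 1 →
        (inner ℝ (gp - gm) tΓ : ℝ) = 0 →
        βp * (inner ℝ gp nΓ : ℝ) = βm * (inner ℝ gm nΓ : ℝ) →
        0 ≤ lep → 0 ≤ lem → lep + lem ≤ h →
        0 ≤ ap → 0 ≤ am → ρ * h ^ 2 ≤ ap + am →
        lep * (βp * (inner ℝ gp ne : ℝ)) ^ 2 + lem * (βm * (inner ℝ gm ne : ℝ)) ^ 2 ≤
          C ^ 2 * h⁻¹ * (1 + βhi / βlo) ^ 2 *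
            (ap * ‖βp • gp‖ ^ 2 + am * ‖βm • gm‖ ^ 2) := by
  intro ρ hρ
  refine ⟨Real.sqrt (2 / ρ), Real.sqrt_pos.2 (by positivity), ?_⟩
  intro h βlo βhi βp βm lep lem ap am nΓ tΓ ne gp gm
  intro hh hβlo hβloβp hβpβhi hβloβm hβmβhi hnΓ htΓ hnt hne htan hflux
  intro hlep hlem hlsum hap ham hshape
  have hC2 : Real.sqrt (2 / ρ) ^ 2 = 2 / ρ := Real.sq_sqrt (by positivity)
  set a : ℝ := inner ℝ gp nΓ with ha
  set b0 : ℝ := inner ℝ gp tΓ with hb0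
  set c : ℝ := inner ℝ gm nΓ with hc
  set d : ℝ := inner ℝ gm tΓ with hd
  set α : ℝ := inner ℝ ne nΓ with hα
  set γ : ℝ := inner ℝ ne tΓ with hγ
  have hbd : b0 = d := by
    have h2 := htan
    rw [inner_sub_left] at h2
    rw [hb0, hd]
    linarith [h2]
  have hαγ : α ^ 2 + γ ^ 2 = 1 := by
    have h1 := parseval2 nΓ tΓ hnΓ htΓ hnt ne ne
    have h2 : (inner ℝ ne ne : ℝ) = 1 := by
      rw [real_inner_self_eq_norm_sq, hne]; norm_num
    rw [h2, ← hα, ← hγ] at h1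
    linear_combination -h1
  have hgpne : (inner ℝ gp ne : ℝ) = α * a + γ * b0 := by
    rw [parseval2 nΓ tΓ hnΓ htΓ hnt gp ne]; ring
  have hgmne : (inner ℝ gm ne : ℝ) = α * c + γ * d := by
    rw [parseval2 nΓ tΓ hnΓ htΓ hnt gm ne]; ring
  have hgg : ‖gp‖ ^ 2 = a ^ 2 + b0 ^ 2 := by
    rw [← real_inner_self_eq_norm_sq, parseval2 nΓ tΓ hnΓ htΓ hnt gp gp]; ring
  have hmm : ‖gm‖ ^ 2 = c ^ 2 + d ^ 2 := by
    rw [← real_inner_self_eq_norm_sq, parseval2 nΓ tΓ hnΓ htΓ hnt gm gm]; ring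
  have hngp : ‖βp • gp‖ ^ 2 = βp ^ 2 * (a ^ 2 + b0 ^ 2) := by
    rw [norm_smul, mul_pow, hgg, Real.norm_eq_abs, sq_abs]
  have hngm : ‖βm • gm‖ ^ 2 = βm ^ 2 * (c ^ 2 + d ^ 2) := by
    rw [norm_smul, mul_pow, hmm, Real.norm_eq_abs, sq_abs]
  rw [hgpne, hgmne, hngp, hngm, hC2]
  clear hgpne hgmne hngp hngm hgg hmm htan hnΓ htΓ hnt hne hC2
  -- pure real arithmetic from here
  set K : ℝ := βhi / βlo with hK
  have hK1 : 1 ≤ K := (one_le_div hβlo).2 (le_trans hβloβp hβpβhi)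
  set w : ℝ := βp * a with hw
  have hwm : βm * c = w := hflux.symm
  have hβp0 : 0 < βp := lt_of_lt_of_le hβlo hβloβp
  have hβm0 : 0 < βm := lt_of_lt_of_le hβlo hβloβm
  have hβmK : βm ≤ K * βp := by
    rw [hK, div_mul_eq_mul_div, le_div_iff₀ hβlo]
    exact mul_le_mul hβmβhi hβloβp hβlo.le (by linarith)
  have hβpK : βp ≤ K * βm := by
    rw [hK, div_mul_eq_mul_div, le_div_iff₀ hβlo]
    exact mul_le_mul hβpβhi hβloβm hβlo.le (by linarith)
  set Np : ℝ := βp ^ 2 * (a ^ 2 + b0 ^ 2) with hNp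
  set Nm : ℝ := βm ^ 2 * (c ^ 2 + d ^ 2) with hNm
  have hNpw : Np = w ^ 2 + (βp * b0) ^ 2 := by rw [hNp, hw]; ring
  have hNmw : Nm = w ^ 2 + (βm * b0) ^ 2 := by
    rw [hNm, ← hwm, hbd]; ring
  have hNp0 : 0 ≤ Np := by rw [hNp]; positivity
  have hNm0 : 0 ≤ Nm := by rw [hNm]; positivity
  have hNmK : Nm ≤ K ^ 2 * Np := by
    rw [hNmw, hNpw]
    exact comp_bound K w (βm * b0) (βp * b0) hK1 (amp_sq K βm βp b0 hβm0.le hβmK)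
  have hNpK : Np ≤ K ^ 2 * Nm := by
    rw [hNpw, hNmw]
    exact comp_bound K w (βp * b0) (βm * b0) hK1 (amp_sq K βp βm b0 hβp0.le hβpK)
  have h1 : (βp * (α * a + γ * b0)) ^ 2 ≤ Np := by
    rw [hNpw, hw]
    exact edge_sq α γ βp a b0 hαγ
  have h2 : (βm * (α * c + γ * d)) ^ 2 ≤ Nm := by
    have e : (βm * (α * c + γ * d)) ^ 2 = (βm * (α * c + γ * b0)) ^ 2 := by rw [hbd]
    rw [e, hNmw, ← hwm]
    have e2 : (βm * (α * c + γ * b0)) ^ 2 = (α * (βm * c) + γ * (βm * b0)) ^ 2 := by ring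
    rw [e2]
    exact rot_bound α γ (βm * c) (βm * b0) hαγ
  have hleph : lep ≤ h := by linarith
  have hlemh : lem ≤ h := by linarith
  have hM : lep * (βp * (α * a + γ * b0)) ^ 2 + lem * (βm * (α * c + γ * d)) ^ 2
      ≤ h * (Np + Nm) := by
    have e1 : lep * (βp * (α * a + γ * b0)) ^ 2 ≤ h * Np :=
      le_trans (mul_le_mul_of_nonneg_left h1 hlep)
        (mul_le_mul_of_nonneg_right hleph hNp0)
    have e2 : lem * (βm * (α * c + γ * d)) ^ 2 ≤ h * Nm :=
      le_trans (mul_le_mul_of_nonneg_left h2 hlem)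
        (mul_le_mul_of_nonneg_right hlemh hNm0)
    linarith
  have key := key_scalar ρ h K ap am Np Nm hK1 hNp0 hNm0 hap ham hNmK hNpK hshape
  have final : h * (Np + Nm) ≤ 2 / ρ * h⁻¹ * (1 + K) ^ 2 * (ap * Np + am * Nm) := by
    rw [div_mul_eq_mul_div, div_mul_eq_mul_div, div_mul_eq_mul_div, le_div_iff₀ hρ]
    have hhinv : h * (Np + Nm) * ρ = ρ * h ^ 2 * (Np + Nm) * h⁻¹ := by
      field_simp
    rw [hhinv]
    calc ρ * h ^ 2 * (Np + Nm) * h⁻¹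
        ≤ 2 * (1 + K) ^ 2 * (ap * Np + am * Nm) * h⁻¹ :=
          mul_le_mul_of_nonneg_right key (inv_nonneg.2 hh.le)
      _ = 2 * h⁻¹ * (1 + K) ^ 2 * (ap * Np + am * Nm) := by ring
  linarith [hM, final]
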